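/- Integrality for grouplike generators: let G be a group generated by elements of finite order, let α : G × G → k× be a normalized 2-cocycle, and let σ(g,h) = α(g,h) t_g t_h / t_{gh} in Frac k[t_g : g ∈ G] be the generic cocycle. Let B ⊆ Frac k[t_g : g ∈ G] be the subalgebra generated by all σ(g,h) and σ(g,h)⁻¹. Then for every g ∈ G of order n, t_g^n = t_1 · (σ(g^{n-1},g)σ(g^{n-2},g)⋯σ(g,g)) / (α(g,g)α(g²,g)⋯α(g^{n-1},g)) ∈ B; consequently every t_g (g ∈ G) is integral over B. -/

import Mathlib

variable (k : Type*) [Field k]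
variable (G : Type*) [Group G]

/-- The image of the indeterminate `t_g` in `Frac k[t_g : g ∈ G]`. -/
noncomputable def t (g : G) : FractionRing (MvPolynomial G k) :=
  algebraMap (MvPolynomial G k) (FractionRing (MvPolynomial G k)) (MvPolynomial.X g)

/-- The generic cocycle `σ(g,h) = α(g,h) t_g t_h / t_{gh}`. -/
noncomputable def genCocycle (α : G → G → kˣ) (g h : G) :
    FractionRing (MvPolynomial G k) :=
  algebraMap k (FractionRing (MvPolynomial G k)) (α g h : k) * t k G g * t k G h / t k G (g * h)

/-- The generic base algebra `B`, generated by the values of the generic cocycle `σ`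
and their inverses. -/
noncomputable def Bgen (α : G → G → kˣ) : Subalgebra k (FractionRing (MvPolynomial G k)) :=
  Algebra.adjoin k
    ({z | ∃ g h : G, z = genCocycle k G α g h} ∪
     {z | ∃ g h : G, z = (genCocycle k G α g h)⁻¹})

lemma t_ne_zero (g : G) : t k G g ≠ 0 := by
  have h := IsFractionRing.injective (MvPolynomial G k) (FractionRing (MvPolynomial G k))
  simp only [t]
  rw [map_ne_zero_iff (algebraMap (MvPolynomial G k) (FractionRing (MvPolynomial G k))) h]
  exact MvPolynomial.X_ne_zero g

lemma alg_ne_zero (c : kˣ) :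
    algebraMap k (FractionRing (MvPolynomial G k)) (c : k) ≠ 0 := by
  simpa using c.ne_zero

lemma sigma_mem (α : G → G → kˣ) (g h : G) : genCocycle k G α g h ∈ Bgen k G α :=
  Algebra.subset_adjoin (Or.inl ⟨g, h, rfl⟩)

lemma sigma_inv_mem (α : G → G → kˣ) (g h : G) : (genCocycle k G α g h)⁻¹ ∈ Bgen k G α :=
  Algebra.subset_adjoin (Or.inr ⟨g, h, rfl⟩)

lemma t_one_eq (α : G → G → kˣ) (hα : α 1 1 = 1) : t k G (1 : G) = genCocycle k G α 1 1 := by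
  have h1 : t k G ((1 : G) * 1) = t k G 1 := by rw [one_mul]
  rw [genCocycle, hα, h1]
  have := t_ne_zero k G (1 : G)
  push_cast
  field_simp

lemma t_one_mem (α : G → G → kˣ) (hα : α 1 1 = 1) : t k G (1 : G) ∈ Bgen k G α := by
  rw [t_one_eq k G α hα]; exact sigma_mem k G α 1 1

lemma prod_sigma (α : G → G → kˣ) (g : G) (m : ℕ) :
    ∏ j ∈ Finset.Icc 1 m, genCocycle k G α (g ^ j) g =
      algebraMap k (FractionRing (MvPolynomial G k))
        (∏ j ∈ Finset.Icc 1 m, (α (g ^ j) g : k)) * t k G g ^ (m + 1) / t k G (g ^ (m + 1)) := by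
  induction m with
  | zero =>
      have he : Finset.Icc 1 0 = (∅ : Finset ℕ) := by simp
      rw [he]
      simp [div_self (t_ne_zero k G g)]
  | succ m ih =>
      rw [Finset.prod_Icc_succ_top (Nat.le_add_left 1 m),
        Finset.prod_Icc_succ_top (Nat.le_add_left 1 m), ih]
      rw [genCocycle]
      have hmul : g ^ (m + 1) * g = g ^ (m + 2) := by rw [← pow_succ]
      rw [hmul, map_mul]
      have h1 := t_ne_zero k G (g ^ (m + 1))
      have h2 := t_ne_zero k G (g ^ (m + 2))
      field_simp
      ring

lemma mem_integral (α : G → G → kˣ) {x : FractionRing (MvPolynomial G k)}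
    (hx : x ∈ Bgen k G α) : IsIntegral (Bgen k G α) x :=
  isIntegral_algebraMap (R := Bgen k G α) (x := ⟨x, hx⟩)

lemma t_mul_integral (α : G → G → kˣ) (x y : G)
    (hx : IsIntegral (Bgen k G α) (t k G x)) (hy : IsIntegral (Bgen k G α) (t k G y)) :
    IsIntegral (Bgen k G α) (t k G (x * y)) := by
  have heq : t k G (x * y) =
      algebraMap k (FractionRing (MvPolynomial G k)) (α x y : k) * t k G x * t k G y *
        (genCocycle k G α x y)⁻¹ := by
    rw [genCocycle]
    have h1 := t_ne_zero k G (x * y)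
    have h2 := t_ne_zero k G x
    have h3 := t_ne_zero k G y
    have h4 := alg_ne_zero k G (α x y)
    field_simp
  rw [heq]
  exact (((mem_integral k G α (Subalgebra.algebraMap_mem _ _)).mul hx).mul hy).mul
    (mem_integral k G α (sigma_inv_mem k G α x y))

/-- Integrality for grouplike generators: if `G` is generated by its elements of
finite order and `α` is a normalized 2-cocycle with values in `k×`, then for every
`g ∈ G` of order `n`,
`t_g^n = t_1 · (σ(g^{n-1},g) ⋯ σ(g,g)) / (α(g,g) ⋯ α(g^{n-1},g))` lies in `B`;
consequently every `t_g` is integral over `B`. -/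
theorem t_integral_over_B (α : G → G → kˣ)
    (hgen : Subgroup.closure {g : G | ∃ n : ℕ, 0 < n ∧ g ^ n = 1} = ⊤)
    (hcocycle : ∀ g h l : G, (α g h : k) * α (g * h) l = (α h l : k) * α g (h * l))
    (hnorm : ∀ g : G, α g 1 = 1 ∧ α 1 g = 1) :
    (∀ (g : G) (n : ℕ), 0 < n → orderOf g = n →
      (t k G g ^ n =
        t k G 1 * (∏ j ∈ Finset.Icc 1 (n - 1), genCocycle k G α (g ^ j) g) /
          algebraMap k (FractionRing (MvPolynomial G k))
            (∏ j ∈ Finset.Icc 1 (n - 1), (α (g ^ j) g : k)) ∧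
       t k G g ^ n ∈ Bgen k G α)) ∧
    ∀ g : G, IsIntegral (Bgen k G α) (t k G g) := by
  have hmain : ∀ (g : G) (n : ℕ), 0 < n → orderOf g = n →
      (t k G g ^ n =
        t k G 1 * (∏ j ∈ Finset.Icc 1 (n - 1), genCocycle k G α (g ^ j) g) /
          algebraMap k (FractionRing (MvPolynomial G k))
            (∏ j ∈ Finset.Icc 1 (n - 1), (α (g ^ j) g : k)) ∧
       t k G g ^ n ∈ Bgen k G α) := by
    intro g n hn ho
    have hgn : g ^ n = 1 := by rw [← ho]; exact pow_orderOf_eq_one g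
    have hps := prod_sigma k G α g (n - 1)
    have hm : n - 1 + 1 = n := Nat.succ_pred_eq_of_pos hn
    rw [hm, hgn] at hps
    have hAk : (∏ j ∈ Finset.Icc 1 (n - 1), (α (g ^ j) g : k)) ≠ 0 :=
      Finset.prod_ne_zero_iff.2 fun j _ => (α (g ^ j) g).ne_zero
    have hA : algebraMap k (FractionRing (MvPolynomial G k))
        (∏ j ∈ Finset.Icc 1 (n - 1), (α (g ^ j) g : k)) ≠ 0 := by
      rw [Ne, map_eq_zero_iff _ (algebraMap k (FractionRing (MvPolynomial G k))).injective]
      exact hAk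
    have heq : t k G g ^ n =
        t k G 1 * (∏ j ∈ Finset.Icc 1 (n - 1), genCocycle k G α (g ^ j) g) /
          algebraMap k (FractionRing (MvPolynomial G k))
            (∏ j ∈ Finset.Icc 1 (n - 1), (α (g ^ j) g : k)) := by
      have h1 := t_ne_zero k G (1 : G)
      rw [hps, mul_comm (t k G 1), div_mul_cancel₀ _ h1, mul_comm, mul_div_assoc,
        div_self hA, mul_one]
    refine ⟨heq, ?_⟩
    rw [heq, div_eq_mul_inv, ← map_inv₀]
    exact mul_mem (mul_mem (t_one_mem k G α (hnorm 1).1)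
      (prod_mem fun j _ => sigma_mem k G α (g ^ j) g))
      (Subalgebra.algebraMap_mem _ _)
  refine ⟨hmain, ?_⟩
  have hfin : ∀ g : G, (∃ n : ℕ, 0 < n ∧ g ^ n = 1) → IsIntegral (Bgen k G α) (t k G g) := by
    rintro g ⟨n, hn, hgn⟩
    have hof : IsOfFinOrder g := isOfFinOrder_iff_pow_eq_one.2 ⟨n, hn, hgn⟩
    have hpos : 0 < orderOf g := hof.orderOf_pos
    exact IsIntegral.of_pow hpos (mem_integral k G α (hmain g (orderOf g) hpos rfl).2)
  intro g
  have hg : g ∈ Subgroup.closure {g : G | ∃ n : ℕ, 0 < n ∧ g ^ n = 1} := by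
    rw [hgen]; exact Subgroup.mem_top g
  have key : IsIntegral (Bgen k G α) (t k G g) ∧ IsIntegral (Bgen k G α) (t k G g⁻¹) := by
    induction hg using Subgroup.closure_induction with
    | mem x hx =>
        obtain ⟨n, hn, hxn⟩ := hx
        exact ⟨hfin x ⟨n, hn, hxn⟩, hfin x⁻¹ ⟨n, hn, by rw [inv_pow, hxn, inv_one]⟩⟩
    | one =>
        have h1 := mem_integral k G α (t_one_mem k G α (hnorm 1).1)
        exact ⟨h1, by rwa [inv_one]⟩
    | mul x y hx hy ihx ihy =>
        refine ⟨t_mul_integral k G α x y ihx.1 ihy.1, ?_⟩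
        rw [mul_inv_rev]
        exact t_mul_integral k G α y⁻¹ x⁻¹ ihy.2 ihx.2
    | inv x hx ihx =>
        exact ⟨ihx.2, by rw [inv_inv]; exact ihx.1⟩
  exact key.1
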